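/- Under the hypotheses of the weighted mean comparison (p, q positive continuous non-decreasing probability densities on [a,b] with p/q strictly decreasing, θ positive non-decreasing), equality ∫_I p·θ dx = ∫_I q·θ dx holds if and only if θ is constant a.e. on [a,b]. -/

import Mathlib

set_option maxHeartbeats 1000000


open Set intervalIntegral MeasureTheory

theorem stmt_2 (a b : ℝ) (hab : a < b) (p q θ : ℝ → ℝ)
    (hpc : ContinuousOn p (Icc a b)) (hqc : ContinuousOn q (Icc a b))
    (hppos : ∀ x ∈ Icc a b, 0 < p x) (hqpos : ∀ x ∈ Icc a b, 0 < q x)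
    (hpmono : MonotoneOn p (Icc a b)) (hqmono : MonotoneOn q (Icc a b))
    (hpint : ∫ x in a..b, p x = 1) (hqint : ∫ x in a..b, q x = 1)
    (hpq : StrictAntiOn (fun x => p x / q x) (Icc a b))
    (hθpos : ∀ x ∈ Icc a b, 0 < θ x) (hθmono : MonotoneOn θ (Icc a b))
    (hpθ : IntervalIntegrable (fun x => p x * θ x) volume a b)
    (hqθ : IntervalIntegrable (fun x => q x * θ x) volume a b) :
    (∫ x in a..b, p x * θ x) = ∫ x in a..b, q x * θ x ↔
      ∃ c : ℝ, ∀ᵐ x ∂(volume.restrict (Icc a b)), θ x = c := by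
  have haI : a ∈ Icc a b := ⟨le_rfl, hab.le⟩
  have hbI : b ∈ Icc a b := ⟨hab.le, le_rfl⟩
  constructor
  · intro heq
    -- boundary values of p/q
    have hra : 1 < p a / q a := by
      by_contra h
      push_neg at h
      have hlt : ∫ x in a..b, p x < ∫ x in a..b, q x := by
        apply integral_lt_integral_of_continuousOn_of_le_of_exists_lt hab hpc hqc
        · intro x hx
          have hxI : x ∈ Icc a b := Ioc_subset_Icc_self hx
          have := hpq haI hxI hx.1
          have hq := hqpos x hxI
          have : p x / q x < 1 := lt_of_lt_of_le this h
          nlinarith [div_lt_one hq |>.mp this]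
        · refine ⟨b, hbI, ?_⟩
          have := hpq haI hbI hab
          have hq := hqpos b hbI
          have : p b / q b < 1 := lt_of_lt_of_le this h
          linarith [(div_lt_one hq).mp this]
      rw [hpint, hqint] at hlt; exact lt_irrefl _ hlt
    have hrb : p b / q b < 1 := by
      by_contra h
      push_neg at h
      have hlt : ∫ x in a..b, q x < ∫ x in a..b, p x := by
        apply integral_lt_integral_of_continuousOn_of_le_of_exists_lt hab hqc hpc
        · intro x hx
          have hxI : x ∈ Icc a b := Ioc_subset_Icc_self hx
          rcases eq_or_lt_of_le hx.2 with rfl | hxb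
          · have hq := hqpos x hxI
            nlinarith [(one_le_div hq).mp h]
          · have := hpq hxI hbI hxb
            have hq := hqpos x hxI
            have : 1 < p x / q x := lt_of_le_of_lt h this
            nlinarith [(one_lt_div hq).mp this]
        · refine ⟨a, haI, ?_⟩
          have hq := hqpos a haI
          linarith [(one_lt_div hq).mp hra]
      rw [hpint, hqint] at hlt; exact lt_irrefl _ hlt
    -- crossing point
    have hrc : ContinuousOn (fun x => p x / q x) (Icc a b) :=
      hpc.div hqc (fun x hx => (hqpos x hx).ne')
    have h1 : (1 : ℝ) ∈ Ioo (p b / q b) (p a / q a) := ⟨hrb, hra⟩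
    obtain ⟨c, hcIoo, hc1⟩ := intermediate_value_Ioo' hab.le hrc h1
    have hcI : c ∈ Icc a b := Ioo_subset_Icc_self hcIoo
    have hpqc : p c = q c := by
      have hq := hqpos c hcI
      field_simp at hc1
      linarith
    -- sign facts
    have hlt_of_lt : ∀ x ∈ Icc a b, x < c → q x < p x := by
      intro x hx hxc
      have := hpq hx hcI hxc
      rw [hc1] at this
      have hq := hqpos x hx
      nlinarith [(one_lt_div hq).mp this]
    have hgt_of_gt : ∀ x ∈ Icc a b, c < x → p x < q x := by
      intro x hx hxc
      have := hpq hcI hx hxc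
      rw [hc1] at this
      have hq := hqpos x hx
      nlinarith [(div_lt_one hq).mp this]
    set g : ℝ → ℝ := fun x => (q x - p x) * (θ x - θ c) with hg
    have hgnonneg : ∀ x ∈ Icc a b, 0 ≤ g x := by
      intro x hx
      rcases lt_trichotomy x c with h | rfl | h
      · have h1 := hlt_of_lt x hx h
        have h2 := hθmono hx hcI h.le
        have h3 : 0 ≤ (p x - q x) * (θ c - θ x) :=
          mul_nonneg (by linarith) (by linarith)
        have : 0 ≤ (q x - p x) * (θ x - θ c) := by nlinarith
        simpa [hg] using this
      · simp [hg]
      · have h1 := hgt_of_gt x hx h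
        have h2 := hθmono hcI hx h.le
        have : 0 ≤ (q x - p x) * (θ x - θ c) :=
          mul_nonneg (by linarith) (by linarith)
        simpa [hg] using this
    have hpI : IntervalIntegrable p volume a b := hpc.intervalIntegrable_of_Icc hab.le
    have hqI : IntervalIntegrable q volume a b := hqc.intervalIntegrable_of_Icc hab.le
    have hA : IntervalIntegrable (fun x => q x * θ x - p x * θ x) volume a b := hqθ.sub hpθ
    have hB : IntervalIntegrable (fun x => θ c * (q x - p x)) volume a b :=
      (hqI.sub hpI).const_mul _
    have hgI : IntervalIntegrable g volume a b := by
      have : g = fun x => (q x * θ x - p x * θ x) - θ c * (q x - p x) := by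
        funext x; ring
      rw [this]; exact hA.sub hB
    have hInt : ∫ x in a..b, g x = 0 := by
      have : ∫ x in a..b, g x =
          (∫ x in a..b, (q x * θ x - p x * θ x)) - ∫ x in a..b, θ c * (q x - p x) := by
        rw [← integral_sub hA hB]
        congr 1; funext x; ring
      rw [this, integral_sub hqθ hpθ, intervalIntegral.integral_const_mul, integral_sub hqI hpI,
        hpint, hqint, heq]
      ring
    have hgOn : IntegrableOn g (Icc a b) volume := by
      rw [integrableOn_Icc_iff_integrableOn_Ioc]
      exact (intervalIntegrable_iff_integrableOn_Ioc_of_le hab.le).mp hgI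
    have hIntIcc : ∫ x in Icc a b, g x = 0 := by
      rw [integral_Icc_eq_integral_Ioc, ← integral_of_le hab.le, hInt]
    have hae0 : g =ᵐ[volume.restrict (Icc a b)] 0 :=
      (MeasureTheory.integral_eq_zero_iff_of_nonneg_ae
        ((ae_restrict_iff' measurableSet_Icc).2 (ae_of_all _ hgnonneg)) hgOn).mp hIntIcc
    refine ⟨θ c, ?_⟩
    have hcne : ∀ᵐ x ∂(volume.restrict (Icc a b)), x ≠ c := by
      rw [ae_iff]
      have : {x | ¬ x ≠ c} = {c} := by ext x; simp
      rw [this, Measure.restrict_apply (MeasurableSet.singleton c)]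
      exact measure_mono_null inter_subset_left (measure_singleton c)
    filter_upwards [hae0, ae_restrict_mem measurableSet_Icc, hcne] with x hx0 hxI hxc
    have hne : q x - p x ≠ 0 := by
      rcases hxc.lt_or_gt with h | h
      · exact ne_of_lt (sub_neg.mpr (hlt_of_lt x hxI h))
      · exact ne_of_gt (sub_pos.mpr (hgt_of_gt x hxI h))
    have : (q x - p x) * (θ x - θ c) = 0 := hx0
    rcases mul_eq_zero.mp this with h | h
    · exact absurd h hne
    · linarith [sub_eq_zero.mp h]
  · rintro ⟨c, hc⟩
    have hcIoc : θ =ᵐ[volume.restrict (Ioc a b)] fun _ => c := by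
      exact ae_restrict_of_ae_restrict_of_subset Ioc_subset_Icc_self hc
    have key : ∀ f : ℝ → ℝ, (∫ x in a..b, f x = 1) →
        ∫ x in a..b, f x * θ x = c := by
      intro f hf
      rw [integral_of_le hab.le] at hf ⊢
      calc ∫ x in Ioc a b, f x * θ x = ∫ x in Ioc a b, f x * c :=
            MeasureTheory.integral_congr_ae (hcIoc.mono fun x hx => by simp only []; rw [show θ x = c from hx])
        _ = (∫ x in Ioc a b, f x) * c := by rw [MeasureTheory.integral_mul_const]
        _ = c := by rw [hf, one_mul]
    rw [key p hpint, key q hqint]
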